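/- Let X be a Banach space, S_α(t), P_α(t) families of bounded operators on X, and K > 0 with ‖S_α(t)v‖ ≤ K‖v‖·min{t^{−α},1} and ‖t^{α−1}P_α(t)v‖ ≤ K‖v‖·min{t^{−α−1},t^{α−1}} for all v ∈ X, t > 0. Suppose f : [0,∞) × X → X satisfies: for every κ > 0 there is R > 0 with ‖f(t,u)‖ ≤ κ‖u‖ whenever ‖u‖ < R. Then there exist δ > 0 and C > 0 such that any continuous u : [0,∞) → X solving u(t) = S_α(t)u_0 + ∫_0^t (t−s)^{α−1} P_α(t−s) f(s,u(s)) ds with ‖u_0‖ ≤ δ satisfies ‖u(t)‖ ≤ C‖u_0‖·min{t^{−α},1} for all t > 0. -/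

import Mathlib

open MeasureTheory Real Set

lemma hg_mul {α : ℝ} (hα0 : 0 < α) {s : ℝ} (hs : 0 < s) :
    min (s ^ (-α)) 1 * max (s ^ α) 1 = 1 := by
  rcases le_total s 1 with h | h
  · rw [min_eq_right (one_le_rpow_of_pos_of_le_one_of_nonpos hs h (by linarith)),
      max_eq_right (rpow_le_one hs.le h hα0.le), one_mul]
  · rw [min_eq_left (rpow_le_one_of_one_le_of_nonpos h (by linarith)),
      max_eq_left (one_le_rpow h hα0.le), ← rpow_add hs, neg_add_cancel, rpow_zero]

lemma kernel_integrable' {α : ℝ} (hα : α ∈ Set.Ioo (0:ℝ) 1) {t : ℝ} (ht : 0 < t) :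
    IntegrableOn (fun s => min ((t - s) ^ (-α - 1)) ((t - s) ^ (α - 1)) * min (s ^ (-α)) 1)
      (Ioc 0 t) := by
  obtain ⟨hα0, hα1⟩ := hα
  have hmaj : IntegrableOn (fun s => (t - s) ^ (α - 1)) (Ioc 0 t) := by
    have h1 : IntervalIntegrable (fun x : ℝ => x ^ (α - 1)) volume 0 t :=
      intervalIntegral.intervalIntegrable_rpow' (by linarith)
    have h2 := h1.comp_sub_left t
    simp only [sub_zero, sub_self] at h2
    exact (intervalIntegrable_iff_integrableOn_Ioc_of_le ht.le).mp h2.symm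
  refine Integrable.mono' hmaj ((by fun_prop : Measurable fun s : ℝ =>
    min ((t - s) ^ (-α - 1)) ((t - s) ^ (α - 1)) * min (s ^ (-α)) 1)).aestronglyMeasurable ?_
  refine ae_restrict_of_forall_mem measurableSet_Ioc (fun s hs => ?_)
  have h1 : (0:ℝ) ≤ t - s := by linarith [hs.2]
  have k0 : 0 ≤ min ((t - s) ^ (-α - 1)) ((t - s) ^ (α - 1)) :=
    le_min (rpow_nonneg h1 _) (rpow_nonneg h1 _)
  have w0 : 0 ≤ min (s ^ (-α)) 1 := le_min (rpow_nonneg hs.1.le _) one_pos.le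
  rw [Real.norm_of_nonneg (mul_nonneg k0 w0)]
  calc min ((t - s) ^ (-α - 1)) ((t - s) ^ (α - 1)) * min (s ^ (-α)) 1
      ≤ ((t - s) ^ (α - 1)) * 1 :=
        mul_le_mul (min_le_right _ _) (min_le_right _ _) w0 (rpow_nonneg h1 _)
    _ = (t - s) ^ (α - 1) := mul_one _


lemma kernel_bound {α : ℝ} (hα : α ∈ Set.Ioo (0:ℝ) 1) {t : ℝ} (ht : 0 < t) :
    ∫ s in Ioc 0 t, min ((t - s) ^ (-α - 1)) ((t - s) ^ (α - 1)) * min (s ^ (-α)) 1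
      ≤ (4 / α + 4 / (1 - α)) * min (t ^ (-α)) 1 := by
  obtain ⟨hα0, hα1⟩ := hα
  have h1α : (0:ℝ) < 1 - α := by linarith
  have hψint := kernel_integrable' ⟨hα0, hα1⟩ ht
  have hmaj : IntegrableOn (fun s => (t - s) ^ (α - 1)) (Ioc 0 t) := by
    have h1 : IntervalIntegrable (fun x : ℝ => x ^ (α - 1)) volume 0 t :=
      _root_.intervalIntegral.intervalIntegrable_rpow' (by linarith)
    have h2 := h1.comp_sub_left t
    simp only [sub_zero, sub_self] at h2
    exact (intervalIntegrable_iff_integrableOn_Ioc_of_le ht.le).mp h2.symm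
  have hminpos : (0:ℝ) ≤ min (t ^ (-α)) 1 := le_min (rpow_nonneg ht.le _) one_pos.le
  rcases le_or_gt t 2 with ht2 | ht2
  · -- small time case
    have hb1 : ∫ s in Ioc 0 t, min ((t - s) ^ (-α - 1)) ((t - s) ^ (α - 1)) * min (s ^ (-α)) 1
        ≤ ∫ s in Ioc 0 t, (t - s) ^ (α - 1) := by
      refine setIntegral_mono_on hψint hmaj measurableSet_Ioc (fun s hs => ?_)
      have h1 : (0:ℝ) ≤ t - s := by linarith [hs.2]
      calc min ((t - s) ^ (-α - 1)) ((t - s) ^ (α - 1)) * min (s ^ (-α)) 1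
          ≤ ((t - s) ^ (α - 1)) * 1 :=
            mul_le_mul (min_le_right _ _) (min_le_right _ _)
              (le_min (rpow_nonneg hs.1.le _) one_pos.le) (rpow_nonneg h1 _)
        _ = (t - s) ^ (α - 1) := mul_one _
    have hval : ∫ s in Ioc 0 t, (t - s) ^ (α - 1) = t ^ α / α := by
      rw [← _root_.intervalIntegral.integral_of_le ht.le,
        _root_.intervalIntegral.integral_comp_sub_left (fun x => x ^ (α - 1)) t, sub_self, sub_zero,
        _root_.integral_rpow (Or.inl (by linarith : (-1:ℝ) < α - 1))]
      have e : α - 1 + 1 = α := by ring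
      rw [e, zero_rpow hα0.ne', sub_zero]
    have htα : t ^ α ≤ 2 := by
      calc t ^ α ≤ (2:ℝ) ^ α := rpow_le_rpow ht.le ht2 hα0.le
        _ ≤ (2:ℝ) ^ (1:ℝ) := rpow_le_rpow_of_exponent_le (by norm_num) hα1.le
        _ = 2 := rpow_one 2
    have hmin : (1:ℝ)/2 ≤ min (t ^ (-α)) 1 := by
      have h2a : (2:ℝ) ^ (-α) ≤ t ^ (-α) := rpow_le_rpow_of_nonpos ht ht2 (by linarith)
      have h := rpow_le_rpow_of_exponent_le (by norm_num : (1:ℝ) ≤ 2)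
        (by linarith : (-1:ℝ) ≤ -α)
      have h2 : (2:ℝ) ^ (-1:ℝ) = 1/2 := by
        rw [rpow_neg (by norm_num : (0:ℝ) ≤ 2), rpow_one]; norm_num
      rw [h2] at h
      exact le_min (by linarith) (by norm_num)
    have h4α : (0:ℝ) ≤ 4 / (1 - α) := by positivity
    calc ∫ s in Ioc 0 t, min ((t - s) ^ (-α - 1)) ((t - s) ^ (α - 1)) * min (s ^ (-α)) 1
        ≤ t ^ α / α := hb1.trans_eq hval
      _ ≤ 2 / α := by gcongr
      _ = (4 / α) * (1/2) := by ring
      _ ≤ (4 / α) * min (t ^ (-α)) 1 := by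
          apply mul_le_mul_of_nonneg_left hmin (by positivity)
      _ ≤ (4 / α + 4 / (1 - α)) * min (t ^ (-α)) 1 := by nlinarith
  · -- large time case
    have ha0 : (0:ℝ) < t/2 := by linarith
    have ha1 : (1:ℝ) ≤ t/2 := by linarith
    have hab : t/2 ≤ t - 1 := by linarith
    have hb1' : (1:ℝ) ≤ t - 1 := by linarith
    have hx0 : (0:ℝ) ≤ (t/2) ^ (-α) := rpow_nonneg ha0.le _
    have ht0' : (0:ℝ) ≤ t ^ (-α) := rpow_nonneg ht.le _
    -- (t/2)^(-α) ≤ 2 * t^(-α)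
    have hpow4 : (t/2) ^ (-α) ≤ 2 * t ^ (-α) := by
      have he : (t/2) ^ (-α) = t ^ (-α) * (2:ℝ) ^ α := by
        rw [div_eq_mul_inv, mul_rpow ht.le (by norm_num : (0:ℝ) ≤ 2⁻¹),
          inv_rpow (by norm_num : (0:ℝ) ≤ 2), ← rpow_neg (by norm_num : (0:ℝ) ≤ 2),
          neg_neg]
      have h2α : (2:ℝ) ^ α ≤ 2 := by
        calc (2:ℝ) ^ α ≤ (2:ℝ) ^ (1:ℝ) := rpow_le_rpow_of_exponent_le (by norm_num) hα1.le
          _ = 2 := rpow_one 2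
      rw [he]
      nlinarith

    -- large time case continued
    have hsub1 : Ioc (0:ℝ) (t/2) ⊆ Ioc 0 t := Ioc_subset_Ioc le_rfl (by linarith)
    have hsub2 : Ioc (t/2) (t-1) ⊆ Ioc 0 t := Ioc_subset_Ioc ha0.le (by linarith)
    have hsub3 : Ioc (t-1) t ⊆ Ioc 0 t := Ioc_subset_Ioc (by linarith) le_rfl
    have hint1 := hψint.mono_set hsub1
    have hint2 := hψint.mono_set hsub2
    have hint3 := hψint.mono_set hsub3
    have hint23 := hψint.mono_set (Ioc_subset_Ioc ha0.le le_rfl : Ioc (t/2) t ⊆ Ioc 0 t)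
    have hdisj : ∀ a b c : ℝ, Disjoint (Ioc a b) (Ioc b c) := fun a b c => by
      rw [Set.disjoint_left]; rintro x ⟨_, h1⟩ ⟨h2, _⟩; exact absurd h1 (not_le.mpr h2)
    -- weight integrable on Ioc 0 (t/2)
    have hwint : IntegrableOn (fun s : ℝ => min (s ^ (-α)) 1) (Ioc 0 (t/2)) := by
      have h1 : IntervalIntegrable (fun x : ℝ => x ^ (-α)) volume 0 (t/2) :=
        _root_.intervalIntegral.intervalIntegrable_rpow' (by linarith)
      refine Integrable.mono' ((intervalIntegrable_iff_integrableOn_Ioc_of_le ha0.le).mp h1)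
        ((by fun_prop : Measurable fun s : ℝ => min (s ^ (-α)) 1)).aestronglyMeasurable ?_
      refine ae_restrict_of_forall_mem measurableSet_Ioc (fun s hs => ?_)
      rw [Real.norm_of_nonneg (le_min (rpow_nonneg hs.1.le _) one_pos.le)]
      exact min_le_left _ _
    have key1 : ∫ s in Ioc (0:ℝ) (t/2),
        min ((t - s) ^ (-α - 1)) ((t - s) ^ (α - 1)) * min (s ^ (-α)) 1
        ≤ 4 / (1 - α) * t ^ (-α) := by
      have step1 : ∫ s in Ioc (0:ℝ) (t/2),
          min ((t - s) ^ (-α - 1)) ((t - s) ^ (α - 1)) * min (s ^ (-α)) 1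
          ≤ ∫ s in Ioc (0:ℝ) (t/2), (t/2) ^ (-α - 1) * min (s ^ (-α)) 1 := by
        refine setIntegral_mono_on hint1 (hwint.const_mul _) measurableSet_Ioc (fun s hs => ?_)
        have hts : t/2 ≤ t - s := by linarith [hs.2]
        exact mul_le_mul_of_nonneg_right
          ((min_le_left _ _).trans (rpow_le_rpow_of_nonpos ha0 hts (by linarith)))
          (le_min (rpow_nonneg hs.1.le _) one_pos.le)
      have step2 : ∫ s in Ioc (0:ℝ) (t/2), (t/2) ^ (-α - 1) * min (s ^ (-α)) 1
          = (t/2) ^ (-α - 1) * ∫ s in Ioc (0:ℝ) (t/2), min (s ^ (-α)) 1 :=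
        integral_const_mul _ _
      have hwsub1 : Ioc (0:ℝ) 1 ⊆ Ioc 0 (t/2) := Ioc_subset_Ioc le_rfl ha1
      have hwsub2 : Ioc (1:ℝ) (t/2) ⊆ Ioc 0 (t/2) := Ioc_subset_Ioc (by norm_num) le_rfl
      have hrint : IntegrableOn (fun s : ℝ => s ^ (-α)) (Ioc 1 (t/2)) := by
        have h1 : IntervalIntegrable (fun x : ℝ => x ^ (-α)) volume 1 (t/2) :=
          _root_.intervalIntegral.intervalIntegrable_rpow' (by linarith)
        exact (intervalIntegrable_iff_integrableOn_Ioc_of_le ha1).mp h1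
      have e1 : ∫ s in Ioc (0:ℝ) 1, min (s ^ (-α)) 1 ≤ 1 := by
        have h := setIntegral_mono_on (hwint.mono_set hwsub1)
          ((integrableOn_const_iff (C := (1:ℝ))).mpr (Or.inr measure_Ioc_lt_top)) measurableSet_Ioc
          (fun s hs => min_le_right (s ^ (-α)) 1)
        simpa [Real.volume_Ioc] using h
      have e2 : ∫ s in Ioc (1:ℝ) (t/2), min (s ^ (-α)) 1 ≤ (t/2) ^ (1-α) / (1 - α) := by
        have h := setIntegral_mono_on (hwint.mono_set hwsub2) hrint measurableSet_Ioc
          (fun s hs => min_le_left (s ^ (-α)) 1)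
        have hval : ∫ s in Ioc (1:ℝ) (t/2), s ^ (-α) = ((t/2) ^ (1-α) - 1) / (1 - α) := by
          rw [← _root_.intervalIntegral.integral_of_le ha1,
            _root_.integral_rpow (Or.inl (by linarith : (-1:ℝ) < -α))]
          have e : -α + 1 = 1 - α := by ring
          rw [e, one_rpow]
        rw [hval] at h
        have h2 : ((t/2) ^ (1-α) - 1) / (1 - α) ≤ (t/2) ^ (1-α) / (1 - α) :=
          (div_le_div_iff_of_pos_right h1α).mpr (by linarith)
        linarith
      have e3 : ∫ s in Ioc (0:ℝ) (t/2), min (s ^ (-α)) 1 ≤ 1 + (t/2) ^ (1-α) / (1 - α) := by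
        rw [← Ioc_union_Ioc_eq_Ioc (by norm_num : (0:ℝ) ≤ 1) ha1,
          setIntegral_union (hdisj 0 1 (t/2)) measurableSet_Ioc (hwint.mono_set hwsub1)
            (hwint.mono_set hwsub2)]
        linarith
      have hpow1 : (t/2) ^ (-α-1) ≤ (t/2) ^ (-α) := rpow_le_rpow_of_exponent_le ha1 (by linarith)
      have hpow2 : (t/2) ^ (-α-1) * (t/2) ^ (1-α) = (t/2) ^ (-α-1 + (1-α)) := (rpow_add ha0 _ _).symm
      have hpow3 : (t/2) ^ (-α-1+(1-α)) ≤ (t/2) ^ (-α) := rpow_le_rpow_of_exponent_le ha1 (by linarith)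
      have hc0 : (0:ℝ) ≤ (t/2) ^ (-α-1) := rpow_nonneg ha0.le _
      have hc : (t/2) ^ (-α-1) * (1 + (t/2) ^ (1-α)/(1-α)) ≤ 4/(1-α) * t ^ (-α) := by
        have expand : (t/2) ^ (-α-1) * (1 + (t/2) ^ (1-α)/(1-α))
            = (t/2) ^ (-α-1) + ((t/2) ^ (-α-1) * (t/2) ^ (1-α))/(1-α) := by ring
        rw [expand, hpow2]
        have h5 : (t/2) ^ (-α-1+(1-α)) / (1-α) ≤ (t/2) ^ (-α) / (1-α) :=
          (div_le_div_iff_of_pos_right h1α).mpr hpow3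
        have h6 : (t/2) ^ (-α) ≤ (t/2) ^ (-α) / (1-α) := by
          rw [le_div_iff₀ h1α]; nlinarith
        have h7 : (t/2) ^ (-α) / (1-α) ≤ (2 * t ^ (-α)) / (1-α) :=
          (div_le_div_iff_of_pos_right h1α).mpr hpow4
        have h8 : 4/(1-α) * t^(-α) = 2 * ((2 * t ^ (-α))/(1-α)) := by ring
        linarith
      calc ∫ s in Ioc (0:ℝ) (t/2),
          min ((t - s) ^ (-α - 1)) ((t - s) ^ (α - 1)) * min (s ^ (-α)) 1
          ≤ (t/2) ^ (-α - 1) * ∫ s in Ioc (0:ℝ) (t/2), min (s ^ (-α)) 1 := step1.trans_eq step2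
        _ ≤ (t/2) ^ (-α-1) * (1 + (t/2) ^ (1-α)/(1-α)) := mul_le_mul_of_nonneg_left e3 hc0
        _ ≤ 4/(1-α) * t ^ (-α) := hc
    have key2 : ∫ s in Ioc (t/2) (t-1),
        min ((t - s) ^ (-α - 1)) ((t - s) ^ (α - 1)) * min (s ^ (-α)) 1
        ≤ 2/α * t ^ (-α) := by
      have hmaj2 : IntegrableOn (fun s : ℝ => (t - s) ^ (-α-1) * (t/2) ^ (-α)) (Ioc (t/2) (t-1)) := by
        apply Integrable.mul_const
        have hcont : ContinuousOn (fun s : ℝ => (t - s) ^ (-α-1)) (Icc (t/2) (t-1)) :=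
          ContinuousOn.rpow_const ((continuous_const.sub continuous_id).continuousOn)
            (fun x hx => Or.inl (by intro h0; rw [sub_eq_zero] at h0; linarith [hx.2]))
        exact (hcont.integrableOn_Icc).mono_set Ioc_subset_Icc_self
      have step1 : ∫ s in Ioc (t/2) (t-1),
          min ((t - s) ^ (-α - 1)) ((t - s) ^ (α - 1)) * min (s ^ (-α)) 1
          ≤ ∫ s in Ioc (t/2) (t-1), (t - s) ^ (-α-1) * (t/2) ^ (-α) := by
        refine setIntegral_mono_on hint2 hmaj2 measurableSet_Ioc (fun s hs => ?_)
        have h1 : (0:ℝ) ≤ t - s := by linarith [hs.2]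
        exact mul_le_mul (min_le_left _ _)
          ((min_le_left _ _).trans (rpow_le_rpow_of_nonpos ha0 hs.1.le (by linarith)))
          (le_min (rpow_nonneg (by linarith [hs.1] : (0:ℝ) ≤ s) _) one_pos.le)
          (rpow_nonneg h1 _)
      have step2 : ∫ s in Ioc (t/2) (t-1), (t - s) ^ (-α-1) * (t/2) ^ (-α)
          = (∫ s in Ioc (t/2) (t-1), (t - s) ^ (-α-1)) * (t/2) ^ (-α) := integral_mul_const _ _
      have hval : ∫ s in Ioc (t/2) (t-1), (t - s) ^ (-α-1) = ((t/2) ^ (-α) - 1) / (-α) := by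
        rw [← _root_.intervalIntegral.integral_of_le hab,
          _root_.intervalIntegral.integral_comp_sub_left (fun x => x ^ (-α-1)) t]
        have e1 : t - (t-1) = 1 := by ring
        have e2 : t - t/2 = t/2 := by ring
        rw [e1, e2, _root_.integral_rpow (Or.inr ⟨by intro h; exact hα0.ne' (by linarith),
          by rw [Set.uIcc_of_le ha1]; exact fun h => by linarith [h.1]⟩)]
        have e3 : -α - 1 + 1 = -α := by ring
        rw [e3, one_rpow]
      have hval' : ((t/2) ^ (-α) - 1) / (-α) ≤ 1/α := by
        have e : ((t/2) ^ (-α) - 1) / (-α) = (1 - (t/2) ^ (-α))/α := by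
          rw [div_neg, ← neg_div, neg_sub]
        rw [e]
        exact (div_le_div_iff_of_pos_right hα0).mpr (by linarith)
      calc ∫ s in Ioc (t/2) (t-1),
          min ((t - s) ^ (-α - 1)) ((t - s) ^ (α - 1)) * min (s ^ (-α)) 1
          ≤ (∫ s in Ioc (t/2) (t-1), (t - s) ^ (-α-1)) * (t/2) ^ (-α) := step1.trans_eq step2
        _ ≤ (1/α) * (t/2) ^ (-α) :=
            mul_le_mul_of_nonneg_right (by rw [hval]; exact hval') hx0
        _ ≤ (1/α) * (2 * t ^ (-α)) := mul_le_mul_of_nonneg_left hpow4 (by positivity)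
        _ = 2/α * t ^ (-α) := by ring
    have key3 : ∫ s in Ioc (t-1) t,
        min ((t - s) ^ (-α - 1)) ((t - s) ^ (α - 1)) * min (s ^ (-α)) 1
        ≤ 2/α * t ^ (-α) := by
      have hmaj3 : IntegrableOn (fun s : ℝ => (t - s) ^ (α-1) * (t/2) ^ (-α)) (Ioc (t-1) t) :=
        (hmaj.mono_set (Ioc_subset_Ioc (by linarith) le_rfl)).mul_const _
      have step1 : ∫ s in Ioc (t-1) t,
          min ((t - s) ^ (-α - 1)) ((t - s) ^ (α - 1)) * min (s ^ (-α)) 1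
          ≤ ∫ s in Ioc (t-1) t, (t - s) ^ (α-1) * (t/2) ^ (-α) := by
        refine setIntegral_mono_on hint3 hmaj3 measurableSet_Ioc (fun s hs => ?_)
        have h1 : (0:ℝ) ≤ t - s := by linarith [hs.2]
        exact mul_le_mul (min_le_right _ _)
          ((min_le_left _ _).trans
            (rpow_le_rpow_of_nonpos ha0 (by linarith [hs.1]) (by linarith)))
          (le_min (rpow_nonneg (by linarith [hs.1] : (0:ℝ) ≤ s) _) one_pos.le)
          (rpow_nonneg h1 _)
      have step2 : ∫ s in Ioc (t-1) t, (t - s) ^ (α-1) * (t/2) ^ (-α)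
          = (∫ s in Ioc (t-1) t, (t - s) ^ (α-1)) * (t/2) ^ (-α) := integral_mul_const _ _
      have hval : ∫ s in Ioc (t-1) t, (t - s) ^ (α-1) = 1/α := by
        rw [← _root_.intervalIntegral.integral_of_le (by linarith : t-1 ≤ t),
          _root_.intervalIntegral.integral_comp_sub_left (fun x => x ^ (α-1)) t, sub_self]
        have e1 : t - (t-1) = 1 := by ring
        rw [e1, _root_.integral_rpow (Or.inl (by linarith : (-1:ℝ) < α - 1))]
        have e : α - 1 + 1 = α := by ring
        rw [e, one_rpow, zero_rpow hα0.ne', sub_zero]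
      calc ∫ s in Ioc (t-1) t,
          min ((t - s) ^ (-α - 1)) ((t - s) ^ (α - 1)) * min (s ^ (-α)) 1
          ≤ (∫ s in Ioc (t-1) t, (t - s) ^ (α-1)) * (t/2) ^ (-α) := step1.trans_eq step2
        _ ≤ (1/α) * (t/2) ^ (-α) := by rw [hval]
        _ ≤ (1/α) * (2 * t ^ (-α)) := mul_le_mul_of_nonneg_left hpow4 (by positivity)
        _ = 2/α * t ^ (-α) := by ring
    have hsplit : ∫ s in Ioc (0:ℝ) t,
        min ((t - s) ^ (-α - 1)) ((t - s) ^ (α - 1)) * min (s ^ (-α)) 1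
        = (∫ s in Ioc (0:ℝ) (t/2),
            min ((t - s) ^ (-α - 1)) ((t - s) ^ (α - 1)) * min (s ^ (-α)) 1)
          + ((∫ s in Ioc (t/2) (t-1),
            min ((t - s) ^ (-α - 1)) ((t - s) ^ (α - 1)) * min (s ^ (-α)) 1)
          + ∫ s in Ioc (t-1) t,
            min ((t - s) ^ (-α - 1)) ((t - s) ^ (α - 1)) * min (s ^ (-α)) 1) := by
      rw [← setIntegral_union (hdisj (t/2) (t-1) t) measurableSet_Ioc hint2 hint3,
        Ioc_union_Ioc_eq_Ioc hab (by linarith),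
        ← setIntegral_union (hdisj 0 (t/2) t) measurableSet_Ioc hint1 hint23,
        Ioc_union_Ioc_eq_Ioc ha0.le (by linarith)]
    have hminval : min (t ^ (-α)) 1 = t ^ (-α) :=
      min_eq_left (rpow_le_one_of_one_le_of_nonpos (by linarith) (by linarith))
    rw [hsplit, hminval]
    have hsum : 2/α * t ^ (-α) + 2/α * t ^ (-α) = 4/α * t ^ (-α) := by ring
    have hfin : (4 / α + 4 / (1 - α)) * t ^ (-α) = 4/(1-α) * t ^ (-α) + 4/α * t ^ (-α) := by ring
    linarith


theorem nonlinear_stability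
    {X : Type*} [NormedAddCommGroup X] [NormedSpace ℝ X] [CompleteSpace X]
    (α : ℝ) (hα : α ∈ Set.Ioo (0:ℝ) 1)
    (Sα Pα : ℝ → X →L[ℝ] X) (K : ℝ) (hK : 0 < K)
    (hS : ∀ t : ℝ, 0 < t → ∀ v : X, ‖Sα t v‖ ≤ K * ‖v‖ * min (t ^ (-α)) 1)
    (hP : ∀ t : ℝ, 0 < t → ∀ v : X,
      ‖(t ^ (α - 1)) • Pα t v‖ ≤ K * ‖v‖ * min (t ^ (-α - 1)) (t ^ (α - 1)))
    (f : ℝ → X → X)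
    (hf : ∀ κ : ℝ, 0 < κ → ∃ R : ℝ, 0 < R ∧
      ∀ t : ℝ, 0 ≤ t → ∀ w : X, ‖w‖ < R → ‖f t w‖ ≤ κ * ‖w‖) :
    ∃ δ : ℝ, 0 < δ ∧ ∃ C : ℝ, 0 < C ∧
      ∀ u₀ : X, ‖u₀‖ ≤ δ →
        ∀ u : ℝ → X, Continuous u →
          (∀ t : ℝ, 0 ≤ t →
            u t = Sα t u₀ + ∫ s in (0:ℝ)..t, ((t - s) ^ (α - 1)) • Pα (t - s) (f s (u s))) →
          ∀ t : ℝ, 0 < t → ‖u t‖ ≤ C * ‖u₀‖ * min (t ^ (-α)) 1 := by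
  obtain ⟨hα0, hα1⟩ := hα
  have h1α : (0:ℝ) < 1 - α := by linarith
  set M : ℝ := 4 / α + 4 / (1 - α) with hM
  have hMpos : 0 < M := add_pos (div_pos (by norm_num) hα0) (div_pos (by norm_num) h1α)
  set κ : ℝ := 1 / (2 * K * M) with hκdef
  have hκ : 0 < κ := div_pos one_pos (by nlinarith)
  obtain ⟨R, hR, hfR⟩ := hf κ hκ
  set C : ℝ := 2 * K + ‖Sα 0‖ with hC
  have hCpos : 0 < C := by have := norm_nonneg (Sα 0); rw [hC]; linarith
  refine ⟨R / (2 * C), div_pos hR (by linarith), C, hCpos, fun u₀ hu₀ u hu heqn => ?_⟩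
  have hu0eq : u 0 = Sα 0 u₀ := by
    have h := heqn 0 le_rfl
    rwa [intervalIntegral.integral_same, add_zero] at h
  have hu0le : ‖u 0‖ ≤ C * ‖u₀‖ := by
    rw [hu0eq]
    calc ‖Sα 0 u₀‖ ≤ ‖Sα 0‖ * ‖u₀‖ := (Sα 0).le_opNorm u₀
      _ ≤ C * ‖u₀‖ := mul_le_mul_of_nonneg_right (by rw [hC]; linarith) (norm_nonneg _)
  have hCu₀ : C * ‖u₀‖ ≤ R / 2 := by
    calc C * ‖u₀‖ ≤ C * (R / (2*C)) := mul_le_mul_of_nonneg_left hu₀ hCpos.le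
      _ = R / 2 := by field_simp
  -- key a priori estimate under a smallness assumption on [0, T]
  have key : ∀ T : ℝ, 0 < T → (∀ s ∈ Icc (0:ℝ) T, ‖u s‖ < R) →
      ∀ t ∈ Ioc (0:ℝ) T, ‖u t‖ ≤ C * ‖u₀‖ * min (t ^ (-α)) 1 := by
    intro T hT hsmall
    have hφcont : Continuous (fun s : ℝ => ‖u s‖ * max (s ^ α) 1) :=
      (hu.norm).mul ((continuous_rpow_const hα0.le).max continuous_const)
    obtain ⟨s₀, hs₀mem, hs₀max⟩ := isCompact_Icc.exists_isMaxOn (nonempty_Icc.mpr hT.le)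
      hφcont.continuousOn
    set N := ‖u s₀‖ * max (s₀ ^ α) 1 with hN
    have hNnonneg : 0 ≤ N :=
      mul_nonneg (norm_nonneg _) (le_trans zero_le_one (le_max_right _ _))
    have hNbd : ∀ s ∈ Ioc (0:ℝ) T, ‖u s‖ ≤ N * min (s ^ (-α)) 1 := by
      intro s hs
      have h1 : ‖u s‖ * max (s ^ α) 1 ≤ N := hs₀max ⟨hs.1.le, hs.2⟩
      have h2 : min (s ^ (-α)) 1 * max (s ^ α) 1 = 1 := hg_mul hα0 hs.1
      have h3 : 0 ≤ min (s ^ (-α)) 1 := le_min (rpow_nonneg hs.1.le _) one_pos.le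
      calc ‖u s‖ = ‖u s‖ * max (s ^ α) 1 * min (s ^ (-α)) 1 := by
            rw [mul_assoc, mul_comm (max _ _), h2, mul_one]
        _ ≤ N * min (s ^ (-α)) 1 := mul_le_mul_of_nonneg_right h1 h3
    have step : ∀ t ∈ Ioc (0:ℝ) T, ‖u t‖ * max (t ^ α) 1 ≤ K * ‖u₀‖ + N / 2 := by
      intro t ht
      have ht0 : 0 < t := ht.1
      have hFbound : ∀ s ∈ Ioc (0:ℝ) t,
          ‖((t - s) ^ (α - 1)) • Pα (t - s) (f s (u s))‖ ≤
            (K * κ * N) * (min ((t - s) ^ (-α - 1)) ((t - s) ^ (α - 1)) * min (s ^ (-α)) 1) := by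
        intro s hs
        have hsIcc : s ∈ Icc (0:ℝ) T := ⟨hs.1.le, hs.2.trans ht.2⟩
        have husR : ‖u s‖ < R := hsmall s hsIcc
        have hfs : ‖f s (u s)‖ ≤ κ * ‖u s‖ := hfR s hs.1.le _ husR
        have husN : ‖u s‖ ≤ N * min (s ^ (-α)) 1 := hNbd s ⟨hs.1, hs.2.trans ht.2⟩
        have hw0 : 0 ≤ min (s ^ (-α)) 1 := le_min (rpow_nonneg hs.1.le _) one_pos.le
        rcases eq_or_lt_of_le hs.2 with heq | hlt
        · rw [← heq] at *
          rw [sub_self, zero_rpow (by intro h; exact absurd (by linarith : α = 1) hα1.ne),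
            zero_smul, norm_zero]
          have hk0 : (0:ℝ) ≤ min ((0:ℝ) ^ (-α-1)) 0 := le_min (rpow_nonneg le_rfl _) le_rfl
          exact mul_nonneg (mul_nonneg (mul_nonneg hK.le hκ.le) hNnonneg)
            (mul_nonneg hk0 hw0)
        · have htps : 0 < t - s := by linarith
          have h1 := hP (t - s) htps (f s (u s))
          have hk0 : 0 ≤ min ((t-s) ^ (-α-1)) ((t-s) ^ (α-1)) :=
            le_min (rpow_nonneg htps.le _) (rpow_nonneg htps.le _)
          calc ‖((t - s) ^ (α - 1)) • Pα (t - s) (f s (u s))‖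
              ≤ K * ‖f s (u s)‖ * min ((t-s) ^ (-α-1)) ((t-s) ^ (α-1)) := h1
            _ ≤ K * (κ * (N * min (s ^ (-α)) 1)) * min ((t-s) ^ (-α-1)) ((t-s) ^ (α-1)) := by
                refine mul_le_mul_of_nonneg_right ?_ hk0
                refine mul_le_mul_of_nonneg_left ?_ hK.le
                exact hfs.trans (mul_le_mul_of_nonneg_left husN hκ.le)
            _ = (K * κ * N) * (min ((t-s) ^ (-α-1)) ((t-s) ^ (α-1)) * min (s ^ (-α)) 1) := by
                ring
      have hkb := kernel_bound ⟨hα0, hα1⟩ ht0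
      rw [← hM] at hkb
      have hInorm : ‖∫ s in (0:ℝ)..t, ((t - s) ^ (α - 1)) • Pα (t - s) (f s (u s))‖
          ≤ (K * κ * N) * (M * min (t ^ (-α)) 1) := by
        rw [intervalIntegral.integral_of_le ht0.le]
        refine (norm_integral_le_integral_norm _).trans ?_
        have hintM : Integrable (fun s => (K * κ * N) *
            (min ((t - s) ^ (-α - 1)) ((t - s) ^ (α - 1)) * min (s ^ (-α)) 1))
            (volume.restrict (Ioc 0 t)) := (kernel_integrable' ⟨hα0, hα1⟩ ht0).const_mul _
        have hmono := integral_mono_of_nonneg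
          (Filter.Eventually.of_forall fun s => norm_nonneg _) hintM
          (ae_restrict_of_forall_mem measurableSet_Ioc hFbound)
        refine hmono.trans ?_
        rw [integral_const_mul]
        exact mul_le_mul_of_nonneg_left hkb
          (mul_nonneg (mul_nonneg hK.le hκ.le) hNnonneg)
      have hhalf : (K * κ * N) * (M * min (t ^ (-α)) 1) = N / 2 * min (t ^ (-α)) 1 := by
        rw [hκdef]
        have hKne : K ≠ 0 := hK.ne'
        have hMne : M ≠ 0 := hMpos.ne'
        field_simp
      have hSbound : ‖Sα t u₀‖ ≤ K * ‖u₀‖ * min (t ^ (-α)) 1 := hS t ht0 u₀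
      have hut : ‖u t‖ ≤ (K * ‖u₀‖ + N / 2) * min (t ^ (-α)) 1 := by
        rw [heqn t ht0.le]
        refine (norm_add_le _ _).trans ?_
        refine le_trans (add_le_add hSbound (hInorm.trans_eq hhalf)) (le_of_eq (by ring))
      have h2 : min (t ^ (-α)) 1 * max (t ^ α) 1 = 1 := hg_mul hα0 ht0
      have hmax0 : 0 ≤ max (t ^ α) 1 := le_trans zero_le_one (le_max_right _ _)
      calc ‖u t‖ * max (t ^ α) 1
          ≤ ((K * ‖u₀‖ + N / 2) * min (t ^ (-α)) 1) * max (t ^ α) 1 :=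
            mul_le_mul_of_nonneg_right hut hmax0
        _ = (K * ‖u₀‖ + N / 2) * (min (t ^ (-α)) 1 * max (t ^ α) 1) := by ring
        _ = K * ‖u₀‖ + N / 2 := by rw [h2, mul_one]
    have hNle : N ≤ C * ‖u₀‖ := by
      rcases eq_or_lt_of_le hs₀mem.1 with h0 | h0
      · rw [hN, ← h0, zero_rpow hα0.ne', max_eq_right zero_le_one, mul_one]
        exact hu0le
      · have hstep := step s₀ ⟨h0, hs₀mem.2⟩
        rw [← hN] at hstep
        have hN2 : N ≤ 2 * K * ‖u₀‖ := by linarith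
        calc N ≤ 2 * K * ‖u₀‖ := hN2
          _ ≤ C * ‖u₀‖ := mul_le_mul_of_nonneg_right
              (by rw [hC]; linarith [norm_nonneg (Sα 0)]) (norm_nonneg _)
    intro t ht
    calc ‖u t‖ ≤ N * min (t ^ (-α)) 1 := hNbd t ht
      _ ≤ C * ‖u₀‖ * min (t ^ (-α)) 1 := mul_le_mul_of_nonneg_right hNle
          (le_min (rpow_nonneg ht.1.le _) one_pos.le)
  -- globally ‖u t‖ < R
  have hglob : ∀ t : ℝ, 0 ≤ t → ‖u t‖ < R := by
    by_contra hcon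
    push_neg at hcon
    obtain ⟨t₁, ht₁0, ht₁R⟩ := hcon
    set B : Set ℝ := {t | 0 ≤ t ∧ R ≤ ‖u t‖} with hB
    have hclosed : IsClosed B := by
      have hBeq : B = Ici 0 ∩ (fun t => ‖u t‖) ⁻¹' Ici R := by
        ext x
        simp only [hB, Set.mem_setOf_eq, Set.mem_inter_iff, Set.mem_Ici, Set.mem_preimage]
      rw [hBeq]
      exact isClosed_Ici.inter (isClosed_Ici.preimage hu.norm)
    have hne : B.Nonempty := ⟨t₁, ht₁0, ht₁R⟩
    have hbdd : BddBelow B := ⟨0, fun x hx => hx.1⟩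
    have hmem := hclosed.csInf_mem hne hbdd
    have hT0 : 0 ≤ sInf B := hmem.1
    have hTR : R ≤ ‖u (sInf B)‖ := hmem.2
    have hbefore : ∀ s, 0 ≤ s → s < sInf B → ‖u s‖ < R := by
      intro s hs0 hsT
      by_contra h
      push_neg at h
      exact absurd (csInf_le hbdd ⟨hs0, h⟩) (not_le.mpr hsT)
    have hTpos : 0 < sInf B := by
      rcases hT0.eq_or_lt with h | h
      · exfalso
        rw [← h] at hTR
        exact absurd hTR (not_le.mpr (lt_of_le_of_lt hu0le
          (lt_of_le_of_lt hCu₀ (by linarith))))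
      · exact h
    have hmid : ∀ t, t ∈ Ioo (0:ℝ) (sInf B) → ‖u t‖ ≤ R / 2 := by
      intro t ht
      have h1 : ∀ s ∈ Icc (0:ℝ) t, ‖u s‖ < R := fun s hs =>
        hbefore s hs.1 (lt_of_le_of_lt hs.2 ht.2)
      have h2 := key t ht.1 h1 t ⟨ht.1, le_rfl⟩
      calc ‖u t‖ ≤ C * ‖u₀‖ * min (t ^ (-α)) 1 := h2
        _ ≤ C * ‖u₀‖ * 1 := mul_le_mul_of_nonneg_left (min_le_right _ _)
            (mul_nonneg hCpos.le (norm_nonneg _))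
        _ = C * ‖u₀‖ := mul_one _
        _ ≤ R / 2 := hCu₀
    have htend : Filter.Tendsto (fun s => ‖u s‖) (nhdsWithin (sInf B) (Iio (sInf B)))
        (nhds ‖u (sInf B)‖) := (hu.norm.tendsto (sInf B)).mono_left nhdsWithin_le_nhds
    have hev : ∀ᶠ s in nhdsWithin (sInf B) (Iio (sInf B)), ‖u s‖ ≤ R / 2 :=
      Filter.eventually_of_mem (Ioo_mem_nhdsLT hTpos) (fun s hs => hmid s hs)
    have hfin := le_of_tendsto htend hev
    linarith
  intro t ht
  exact key t ht (fun s hs => hglob s hs.1) t ⟨ht, le_rfl⟩
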